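/- If G is a connected finite simple graph of order n, then avec(G) ≤ (1/n)·⌊3n²/4 − n/2⌋, with equality if and only if G is a path on n vertices. -/

import Mathlib

open SimpleGraph

/-- The eccentricity of a vertex `v`: the maximum distance from `v` to a vertex of `G`. -/
noncomputable def eccent {V : Type*} (G : SimpleGraph V) (v : V) : ℕ :=
  sSup (Set.range (G.dist v))

/-- The average eccentricity of a finite graph `G`. -/
noncomputable def avec {V : Type*} (G : SimpleGraph V) : ℝ :=
  (∑ᶠ v, (eccent G v : ℝ)) / (Nat.card V)

/-- `G` contains no cycle of length `m` as a (not necessarily induced) subgraph. -/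
def CycleFree {V : Type*} (G : SimpleGraph V) (m : ℕ) : Prop :=
  ∀ ⦃v : V⦄ (w : G.Walk v v), w.IsCycle → w.length ≠ m

open Finset

open SimpleGraph Finset

/-- Sum of eccentricities of the path on `n` vertices. -/
def pSum (n : ℕ) : ℕ := ∑ k ∈ Finset.range n, max k (n - 1 - k)

lemma pSum_succ (n : ℕ) : pSum n + n ≤ pSum (n + 1) := by
  unfold pSum
  rw [Finset.sum_range_succ]
  have h1 : ∀ k ∈ Finset.range n, max k (n - 1 - k) ≤ max k (n + 1 - 1 - k) := by
    intro k hk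
    exact max_le_max le_rfl (by omega)
  calc (∑ k ∈ Finset.range n, max k (n - 1 - k)) + n
      ≤ (∑ k ∈ Finset.range n, max k (n + 1 - 1 - k)) + max n (n + 1 - 1 - n) :=
        Nat.add_le_add (Finset.sum_le_sum h1) (by omega)
    _ = _ := rfl

lemma pSum_add (m t : ℕ) : pSum m + t * m ≤ pSum (m + t) := by
  induction t with
  | zero => simp
  | succ t ih =>
    have h1 := pSum_succ (m + t)
    have h2 : pSum (m + t) + m ≤ pSum (m + t + 1) := le_trans (by omega) h1
    have h3 : (t + 1) * m = t * m + m := by ring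
    show pSum m + (t + 1) * m ≤ pSum (m + t + 1)
    omega

lemma pSum_two_step (n : ℕ) : pSum (n + 2) = pSum n + 3 * n + 2 := by
  unfold pSum
  rw [Finset.sum_range_succ, Finset.sum_range_succ']
  have htop : max (n + 1) (n + 2 - 1 - (n + 1)) = n + 1 := by omega
  have hmid : ∀ k ∈ Finset.range n, max (k + 1) (n + 2 - 1 - (k + 1)) = max k (n - 1 - k) + 1 := by
    intro k hk
    simp only [Finset.mem_range] at hk
    omega
  rw [Finset.sum_congr rfl hmid, htop, Finset.sum_add_distrib]
  have h0 : (0 : ℕ) ⊔ (n + 2 - 1 - 0) = n + 1 := by omega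
  rw [h0]
  simp [Finset.card_range]
  ring

lemma pSum_formula (n : ℕ) : 4 * pSum n + n % 2 = 3 * n ^ 2 - 2 * n := by
  induction n using Nat.twoStepInduction with
  | zero => simp [pSum]
  | one => simp [pSum]
  | more n ih _ =>
    rw [pSum_two_step]
    have h : 3 * n ^ 2 ≥ 2 * n := by nlinarith
    have h2 : 3 * (n+2) ^ 2 - 2 * (n+2) = 3 * n ^ 2 - 2 * n + (12 * n + 8) := by
      have : 3 * (n+2)^2 = 3*n^2 + 12*n + 12 := by ring
      omega
    omega


section Basic
variable {V : Type*} {G : SimpleGraph V}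

lemma IsPath.concat' {u v w : V} {p : G.Walk u v} (hp : p.IsPath) (h : G.Adj v w)
    (hw : w ∉ p.support) : (p.concat h).IsPath := by
  rw [← Walk.isPath_reverse_iff, Walk.reverse_concat]
  exact Walk.IsPath.cons hp.reverse (by simpa [Walk.support_reverse] using hw)

lemma dist_le_eccent [Fintype V] (v x : V) : G.dist v x ≤ _root_.eccent G v :=
  le_csSup (Set.finite_range _).bddAbove (Set.mem_range_self x)

lemma eccent_le {m : ℕ} {v : V} (h : ∀ x, G.dist v x ≤ m) : _root_.eccent G v ≤ m :=
  csSup_le ⟨G.dist v v, Set.mem_range_self v⟩ (by rintro _ ⟨x, rfl⟩; exact h x)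

lemma exists_eccent [Fintype V] (v : V) : ∃ x, _root_.eccent G v = G.dist v x := by
  have h1 : _root_.eccent G v = Finset.univ.sup (G.dist v) := by
    apply le_antisymm
    · exact csSup_le ⟨G.dist v v, Set.mem_range_self v⟩
        (by rintro _ ⟨w, rfl⟩; exact Finset.le_sup (Finset.mem_univ w))
    · exact Finset.sup_le fun w _ => le_csSup (Set.finite_range _).bddAbove (Set.mem_range_self w)
  obtain ⟨x, _, hx⟩ := Finset.exists_mem_eq_sup Finset.univ ⟨v, Finset.mem_univ v⟩ (G.dist v)
  exact ⟨x, by rw [h1, hx]⟩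

lemma eccent_anti [Fintype V] {T : SimpleGraph V} (hle : T ≤ G) (hT : T.Connected) (v : V) :
    _root_.eccent G v ≤ _root_.eccent T v :=
  eccent_le fun x => le_trans ((hT.preconnected v x).dist_anti hle) (dist_le_eccent v x)

lemma dist_getVert_le (hG : G.Connected) {u v : V} (w : G.Walk u v) :
    ∀ i j, i ≤ j → G.dist (w.getVert i) (w.getVert j) ≤ j - i := by
  induction w with
  | nil => intro i j _; simp [SimpleGraph.Walk.getVert, SimpleGraph.dist_self]
  | @cons u x v h q ih =>
    intro i j hij
    match i, j with
    | 0, 0 => simp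
    | 0, (j+1) =>
      rw [Walk.getVert_zero, Walk.getVert_cons_succ]
      have h1 : G.dist u x ≤ 1 := by
        have := SimpleGraph.dist_le (Walk.cons h (Walk.nil : G.Walk x x))
        simpa using this
      have h2 := ih 0 j (Nat.zero_le j)
      rw [Walk.getVert_zero] at h2
      have h3 := hG.dist_triangle (u := u) (v := x) (w := q.getVert j)
      omega
    | (i+1), (j+1) =>
      rw [Walk.getVert_cons_succ, Walk.getVert_cons_succ]
      have := ih i j (by omega)
      omega

lemma dist_getVert_eq (hG : G.Connected) {a b : V} (p : G.Walk a b) (hp : p.length = G.dist a b)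
    {i j : ℕ} (hij : i ≤ j) (hj : j ≤ p.length) :
    G.dist (p.getVert i) (p.getVert j) = j - i := by
  have h1 := dist_getVert_le hG p i j hij
  have t1 : G.dist a (p.getVert i) ≤ i := by
    simpa using dist_getVert_le hG p 0 i (Nat.zero_le i)
  have t2 : G.dist (p.getVert j) b ≤ p.length - j := by
    simpa [Walk.getVert_length] using dist_getVert_le hG p j p.length hj
  have h4 := hG.dist_triangle (u := a) (v := p.getVert i) (w := b)
  have h5 := hG.dist_triangle (u := p.getVert i) (v := p.getVert j) (w := b)
  omega

lemma dist_split [DecidableEq V] (hG : G.Connected) {u v x : V} (w : G.Walk u v) (hw : w.length = G.dist u v)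
    (hx : x ∈ w.support) : G.dist u x + G.dist x v = G.dist u v := by
  have h1 : G.dist u x ≤ (w.takeUntil x hx).length := SimpleGraph.dist_le _
  have h2 : G.dist x v ≤ (w.dropUntil x hx).length := SimpleGraph.dist_le _
  have h3 : (w.takeUntil x hx).length + (w.dropUntil x hx).length = w.length := by
    rw [← Walk.length_append, Walk.take_spec]
  have h4 := hG.dist_triangle (u := u) (v := x) (w := v)
  omega

lemma tree_dist_step [DecidableEq V] (hG : G.Connected) (hA : G.IsAcyclic) {x y : V} (hxy : G.Adj x y) (v : V) :
    G.dist v y = G.dist v x + 1 ∨ G.dist v x = G.dist v y + 1 := by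
  obtain ⟨P, hP, hPl⟩ := hG.exists_path_of_dist v y
  by_cases hx : x ∈ P.support
  · left
    have h1 := dist_split hG P hPl hx
    have h2 : G.dist x y = 1 := (SimpleGraph.dist_eq_one_iff_adj).mpr hxy
    omega
  · right
    have hQ : (P.concat hxy.symm).IsPath := IsPath.concat' hP hxy.symm hx
    obtain ⟨R, hR, hRl⟩ := hG.exists_path_of_dist v x
    have hRQ : R = P.concat hxy.symm :=
      congrArg Subtype.val (hA.path_unique ⟨R, hR⟩ ⟨P.concat hxy.symm, hQ⟩)
    rw [← hRl, hRQ, Walk.length_concat, hPl]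

lemma getVert_concat_length {u v w : V} (p : G.Walk u v) (h : G.Adj v w) :
    (p.concat h).getVert p.length = v := by
  rw [Walk.concat_eq_append, Walk.getVert_append]
  simp

lemma tree_no_peak [DecidableEq V] (hG : G.Connected) (hA : G.IsAcyclic) {v u1 u2 u3 : V}
    (h12 : G.Adj u1 u2) (h23 : G.Adj u2 u3) (hne : u1 ≠ u3)
    (e1 : G.dist v u2 = G.dist v u1 + 1) (e3 : G.dist v u2 = G.dist v u3 + 1) : False := by
  obtain ⟨P1, hP1, l1⟩ := hG.exists_path_of_dist v u1
  obtain ⟨P3, hP3, l3⟩ := hG.exists_path_of_dist v u3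
  have hu2P1 : u2 ∉ P1.support := by
    intro hmem
    have := dist_split hG P1 l1 hmem
    omega
  have hu2P3 : u2 ∉ P3.support := by
    intro hmem
    have := dist_split hG P3 l3 hmem
    omega
  have hQ1 : (P1.concat h12).IsPath := IsPath.concat' hP1 h12 hu2P1
  have hQ3 : (P3.concat h23.symm).IsPath := IsPath.concat' hP3 h23.symm hu2P3
  have hEq : P1.concat h12 = P3.concat h23.symm :=
    congrArg Subtype.val (hA.path_unique ⟨_, hQ1⟩ ⟨_, hQ3⟩)
  have hlen : P1.length = P3.length := by omega
  apply hne
  calc u1 = (P1.concat h12).getVert P1.length := (getVert_concat_length P1 h12).symm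
    _ = (P3.concat h23.symm).getVert P3.length := by rw [hEq, hlen]
    _ = u3 := getVert_concat_length P3 h23.symm

end Basic

section Proj
variable {V : Type*} [DecidableEq V] {G : SimpleGraph V}

private lemma desc_chain (f : ℕ → ℕ) : ∀ j, (∀ i < j, f i = f (i + 1) + 1) → f 0 = f j + j := by
  intro j
  induction j with
  | zero => simp
  | succ j ih =>
    intro h
    have h1 := ih (fun i hi => h i (by omega))
    have h2 := h j (by omega)
    omega

private lemma asc_chain (f : ℕ → ℕ) (j d : ℕ) (hjd : j ≤ d)
    (h : ∀ k, j ≤ k → k < d → f (k + 1) = f k + 1) : f d = f j + (d - j) := by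
  induction d with
  | zero => have : j = 0 := by omega
            simp [this]
  | succ d ih =>
    rcases Nat.lt_or_ge j (d + 1) with hlt | hge
    · have h1 := ih (by omega) (fun k hk hkd => h k hk (by omega))
      have h2 := h d (by omega) (by omega)
      omega
    · have : j = d + 1 := by omega
      simp [this]

lemma tree_projection (hG : G.Connected) (hA : G.IsAcyclic) {a b : V} (p : G.Walk a b)
    (hp : p.length = G.dist a b) (x : V) :
    ∃ j ≤ p.length, G.dist x a = G.dist x (p.getVert j) + j ∧
      G.dist x b = G.dist x (p.getVert j) + (p.length - j) := by
  classical
  set d := p.length with hd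
  set g : ℕ → ℕ := fun i => G.dist x (p.getVert i) with hg
  have step : ∀ i < d, g (i + 1) = g i + 1 ∨ g i = g (i + 1) + 1 := by
    intro i hi
    exact tree_dist_step hG hA (p.adj_getVert_succ hi) x
  have upclosed : ∀ i, i < d → g (i + 1) = g i + 1 →
      ∀ k, i ≤ k → k < d → g (k + 1) = g k + 1 := by
    intro i hi hup k hik hkd
    induction k with
    | zero => have : i = 0 := by omega
              rw [this] at hup; exact hup
    | succ k ihk =>
      rcases Nat.lt_or_ge i (k + 1) with hlt | hge
      · have hprev : g (k + 1) = g k + 1 := ihk (by omega) (by omega)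
        rcases step (k + 1) hkd with h | h
        · exact h
        · exfalso
          have hne : p.getVert k ≠ p.getVert (k + 2) := by
            intro heq
            have := dist_getVert_eq hG p hp (show k ≤ k + 2 by omega) (by omega)
            rw [heq] at this
            simp [SimpleGraph.dist_self] at this
          exact tree_no_peak hG hA (p.adj_getVert_succ (by omega))
            (p.adj_getVert_succ (by omega)) hne hprev h
      · have : i = k + 1 := by omega
        rw [this] at hup; exact hup
  by_cases hex : ∃ i, i < d ∧ g (i + 1) = g i + 1
  · set j := Nat.find hex with hj
    obtain ⟨hjd, hjup⟩ := Nat.find_spec hex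
    refine ⟨j, by omega, ?_, ?_⟩
    · have hdesc : ∀ i < j, g i = g (i + 1) + 1 := by
        intro i hij
        rcases step i (by omega) with h | h
        · exact absurd ⟨by omega, h⟩ (Nat.find_min hex hij)
        · exact h
      have := desc_chain g j hdesc
      simpa [hg, Walk.getVert_zero] using this
    · have h2 := asc_chain g j d (by omega) (fun k hk hkd => upclosed j hjd hjup k hk hkd)
      have hb' : p.getVert d = b := p.getVert_length
      simpa [hg, hb'] using h2
  · push_neg at hex
    refine ⟨d, le_rfl, ?_, ?_⟩
    · have hdesc : ∀ i < d, g i = g (i + 1) + 1 := by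
        intro i hid
        rcases step i hid with h | h
        · exact absurd h (hex i hid)
        · exact h
      have := desc_chain g d hdesc
      simpa [hg, Walk.getVert_zero] using this
    · have hb' : p.getVert d = b := p.getVert_length
      simp [hg, hb']

lemma tree_ecc_on_path (hG : G.Connected) (hA : G.IsAcyclic) {a b : V} (p : G.Walk a b)
    (hp : p.length = G.dist a b)
    (ha : ∀ y, G.dist a y ≤ p.length) (hb : ∀ y, G.dist b y ≤ p.length)
    {k : ℕ} (hk : k ≤ p.length) (x : V) :
    G.dist (p.getVert k) x ≤ max k (p.length - k) := by
  obtain ⟨j, hj, hxa, hxb⟩ := tree_projection hG hA p hp x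
  have htri := hG.dist_triangle (u := p.getVert k) (v := p.getVert j) (w := x)
  have hcomm : G.dist (p.getVert j) x = G.dist x (p.getVert j) := SimpleGraph.dist_comm
  have hxa' : G.dist x a = G.dist a x := SimpleGraph.dist_comm
  have hxb' : G.dist x b = G.dist b x := SimpleGraph.dist_comm
  have hax := ha x
  have hbx := hb x
  rcases Nat.le_total k j with hkj | hjk
  · have := dist_getVert_eq hG p hp hkj hj
    omega
  · have := dist_getVert_eq hG p hp hjk hk
    have hcomm2 : G.dist (p.getVert k) (p.getVert j) = G.dist (p.getVert j) (p.getVert k) :=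
      SimpleGraph.dist_comm
    omega

end Proj

section TreeBound
variable {V : Type*} [Fintype V] [DecidableEq V] {T : SimpleGraph V}

lemma tree_sum_bound (hT : T.Connected) (hA : T.IsAcyclic) :
    ∃ (a b : V) (p : T.Walk a b), p.IsPath ∧ p.length = T.dist a b ∧
      p.length + 1 ≤ Fintype.card V ∧
      (∑ v, _root_.eccent T v) + (Fintype.card V - 1 - p.length) ≤ pSum (Fintype.card V) := by
  have hne : Nonempty V := hT.nonempty
  obtain ⟨a, -, ha⟩ := Finset.exists_max_image Finset.univ (_root_.eccent T)
    ⟨Classical.arbitrary V, Finset.mem_univ _⟩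
  have ha' : ∀ v, _root_.eccent T v ≤ _root_.eccent T a := fun v => ha v (Finset.mem_univ v)
  obtain ⟨b, hb⟩ := exists_eccent (G := T) a
  obtain ⟨p, hpath, hgeo⟩ := hT.exists_path_of_dist a b
  set d := p.length with hd
  set n := Fintype.card V with hn
  have hdln : d + 1 ≤ n := hpath.length_lt
  have hecc_le : ∀ v, _root_.eccent T v ≤ d := fun v => le_trans (ha' v) (by omega)
  have hda : ∀ y, T.dist a y ≤ d := fun y => le_trans (dist_le_eccent a y) (by omega)
  have hdb : ∀ y, T.dist b y ≤ d := fun y => le_trans (dist_le_eccent b y) (hecc_le b)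
  refine ⟨a, b, p, hpath, hgeo, hdln, ?_⟩
  -- the set of path vertices
  set PF : Finset V := (Finset.range (d + 1)).image p.getVert with hPF
  have hinj : Set.InjOn p.getVert (Finset.range (d + 1)) := by
    intro i hi j hj hij
    simp only [Finset.coe_range, Set.mem_Iio] at hi hj
    rcases Nat.le_total i j with h | h
    · have := dist_getVert_eq hT p hgeo h (by omega)
      rw [hij] at this
      simp [SimpleGraph.dist_self] at this
      omega
    · have := dist_getVert_eq hT p hgeo h (by omega)
      rw [hij] at this
      simp [SimpleGraph.dist_self] at this
      omega
  have hcard : PF.card = d + 1 := by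
    rw [hPF, Finset.card_image_of_injOn hinj, Finset.card_range]
  have hsum1 : ∑ v ∈ PF, _root_.eccent T v ≤ pSum (d + 1) := by
    rw [hPF, Finset.sum_image (fun i hi j hj h => hinj (by simpa using hi) (by simpa using hj) h)]
    unfold pSum
    apply Finset.sum_le_sum
    intro k hk
    simp only [Finset.mem_range] at hk
    have hkd : k ≤ d := by omega
    have : ∀ x, T.dist (p.getVert k) x ≤ max k (d - k) :=
      fun x => tree_ecc_on_path hT hA p hgeo hda hdb hkd x
    exact le_trans (eccent_le this) (by omega)
  have hsum2 : ∑ v ∈ Finset.univ \ PF, _root_.eccent T v ≤ (n - (d + 1)) * d := by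
    have h1 : ∀ v ∈ Finset.univ \ PF, _root_.eccent T v ≤ d := fun v _ => hecc_le v
    calc ∑ v ∈ Finset.univ \ PF, _root_.eccent T v ≤ (Finset.univ \ PF).card * d :=
          Finset.sum_le_card_nsmul _ _ d h1
      _ = (n - (d + 1)) * d := by
          rw [Finset.card_sdiff_of_subset (Finset.subset_univ PF), hcard, Finset.card_univ]
  have hsplit : ∑ v ∈ Finset.univ \ PF, _root_.eccent T v + ∑ v ∈ PF, _root_.eccent T v = ∑ v, _root_.eccent T v :=
    Finset.sum_sdiff (Finset.subset_univ PF)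
  have hpadd := pSum_add (d + 1) (n - (d + 1))
  have hrw : d + 1 + (n - (d + 1)) = n := by omega
  rw [hrw] at hpadd
  have hmul : (n - (d + 1)) * (d + 1) = (n - (d + 1)) * d + (n - (d + 1)) := by ring
  omega

end TreeBound

section Spanning
variable {V : Type*} [Fintype V]

omit [Fintype V] in
lemma reachable_delete_of {G : SimpleGraph V} {v w : V}
    (hvw : (G \ fromEdgeSet {s(v, w)}).Reachable v w) :
    ∀ {x y : V}, G.Reachable x y → (G \ fromEdgeSet {s(v, w)}).Reachable x y := by
  intro x y hxy
  obtain ⟨p⟩ := hxy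
  induction p with
  | nil => exact Reachable.refl _
  | @cons x z y h q ih =>
    refine Reachable.trans ?_ ih
    by_cases he : s(x, z) = s(v, w)
    · rw [Sym2.eq_iff] at he
      rcases he with ⟨rfl, rfl⟩ | ⟨rfl, rfl⟩
      · exact hvw
      · exact hvw.symm
    · refine Adj.reachable ?_
      rw [sdiff_adj]
      refine ⟨h, ?_⟩
      rw [fromEdgeSet_adj]
      rintro ⟨hmem, -⟩
      exact he (Set.mem_singleton_iff.mp hmem)

lemma exists_spanning_tree (G : SimpleGraph V) (hG : G.Connected) :
    ∃ T ≤ G, T.Connected ∧ T.IsAcyclic := by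
  classical
  suffices H : ∀ (N : ℕ) (G : SimpleGraph V), G.Connected → G.edgeSet.ncard ≤ N →
      ∃ T ≤ G, T.Connected ∧ T.IsAcyclic from H G.edgeSet.ncard G hG le_rfl
  intro N
  induction N with
  | zero =>
    intro G hG hN
    by_cases hA : G.IsAcyclic
    · exact ⟨G, le_rfl, hG, hA⟩
    · exfalso
      unfold SimpleGraph.IsAcyclic at hA
      push_neg at hA
      obtain ⟨u, c, hc⟩ := hA
      have h3 := hc.three_le_length
      have hne : c.edges ≠ [] := by
        intro h
        have := c.length_edges
        rw [h] at this
        simp at this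
        omega
      obtain ⟨e, he⟩ := List.exists_mem_of_ne_nil _ hne
      have heE : e ∈ G.edgeSet := c.edges_subset_edgeSet he
      have : G.edgeSet.ncard = 0 := by omega
      rw [Set.ncard_eq_zero (Set.toFinite _)] at this
      rw [this] at heE
      exact heE
  | succ N ih =>
    intro G hG hN
    by_cases hA : G.IsAcyclic
    · exact ⟨G, le_rfl, hG, hA⟩
    · unfold SimpleGraph.IsAcyclic at hA
      push_neg at hA
      obtain ⟨u, c, hc⟩ := hA
      have h3 := hc.three_le_length
      have hne : c.edges ≠ [] := by
        intro h
        have := c.length_edges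
        rw [h] at this
        simp at this
        omega
      obtain ⟨e, he⟩ := List.exists_mem_of_ne_nil _ hne
      induction e using Sym2.ind with
      | _ v w =>
      have hreach : (G \ fromEdgeSet {s(v, w)}).Reachable v w :=
        (adj_and_reachable_delete_edges_iff_exists_cycle.mpr ⟨u, c, hc, he⟩).2
      set G' := G \ fromEdgeSet {s(v, w)} with hG'
      have hle : G' ≤ G := sdiff_le
      have hconn : G'.Connected := by
        rw [connected_iff]
        exact ⟨fun x y => reachable_delete_of hreach (hG.preconnected x y), hG.nonempty⟩
      have hES : G'.edgeSet = G.edgeSet \ {s(v, w)} := by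
        simp [hG', edgeSet_sdiff, edgeSet_fromEdgeSet, edgeSet_sdiff_sdiff_isDiag]
      have hlt : G'.edgeSet.ncard < G.edgeSet.ncard := by
        rw [hES]
        exact Set.ncard_diff_singleton_lt_of_mem (c.edges_subset_edgeSet he) (Set.toFinite _)
      obtain ⟨T, hT1, hT2, hT3⟩ := ih G' hconn (by omega)
      exact ⟨T, le_trans hT1 hle, hT2, hT3⟩

end Spanning

section Main
variable {V : Type*} [Fintype V] [DecidableEq V]

theorem main_nat (G : SimpleGraph V) (hG : G.Connected) :
    (∑ v, _root_.eccent G v) ≤ pSum (Fintype.card V) ∧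
    ((∑ v, _root_.eccent G v) = pSum (Fintype.card V) →
      Nonempty (G ≃g pathGraph (Fintype.card V))) := by
  obtain ⟨T, hle, hTc, hTa⟩ := exists_spanning_tree G hG
  obtain ⟨a, b, p, hpath, hgeo, hcard, hsum⟩ := tree_sum_bound hTc hTa
  set n := Fintype.card V with hn
  set d := p.length with hd
  have hpt : ∀ v, _root_.eccent G v ≤ _root_.eccent T v := fun v => eccent_anti hle hTc v
  have hGT : (∑ v, _root_.eccent G v) ≤ ∑ v, _root_.eccent T v :=
    Finset.sum_le_sum fun v _ => hpt v
  constructor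
  · omega
  · intro heq
    have hd1 : d = n - 1 := by omega
    have hTsum : (∑ v, _root_.eccent T v) = pSum n := by omega
    -- the vertex enumeration
    set φ : Fin n → V := fun k => p.getVert k.val with hφ
    have hinj : Function.Injective φ := by
      intro i j hij
      rcases Nat.le_total i.val j.val with h | h
      · have := dist_getVert_eq hTc p hgeo h (by omega)
        rw [hφ] at hij
        simp only at hij
        rw [hij] at this
        simp [SimpleGraph.dist_self] at this
        exact Fin.ext (by omega)
      · have := dist_getVert_eq hTc p hgeo h (by omega)
        rw [hφ] at hij
        simp only at hij
        rw [hij] at this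
        simp [SimpleGraph.dist_self] at this
        exact Fin.ext (by omega)
    have hbij : Function.Bijective φ := by
      rw [Fintype.bijective_iff_injective_and_card]
      exact ⟨hinj, by simp [hn]⟩
    have hn2 : 1 ≤ n := by omega
    -- no chords
    have haux : ∀ i j : Fin n, G.Adj (φ i) (φ j) → i.val + 2 ≤ j.val → False := by
      intro i j hadj hij2
      have hkey : ∀ x, G.dist (p.getVert 0) x ≤ n - 2 := by
        intro x
        obtain ⟨k, rfl⟩ := hbij.surjective x
        have hkn : k.val ≤ n - 1 := by omega
        have hdistT : ∀ m : ℕ, m ≤ n - 1 →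
            G.dist (p.getVert 0) (p.getVert m) ≤ m := by
          intro m hm
          refine le_trans ((hTc.preconnected _ _).dist_anti hle) ?_
          have := dist_getVert_le hTc p 0 m (Nat.zero_le m)
          omega
        rcases Nat.lt_or_ge k.val (n - 1) with hk | hk
        · exact le_trans (hdistT k.val (by omega)) (by omega)
        · -- k = n - 1 : use the chord
          have hkval : (φ k) = p.getVert (n - 1) := by
            rw [hφ]; simp only; congr 1; omega
          rw [hkval]
          have t1 : G.dist (p.getVert 0) (p.getVert i.val) ≤ i.val := hdistT i.val (by omega)
          have t2 : G.dist (p.getVert i.val) (p.getVert j.val) ≤ 1 := by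
            have : G.dist (φ i) (φ j) = 1 := SimpleGraph.dist_eq_one_iff_adj.mpr hadj
            rw [hφ] at this
            simp only at this
            omega
          have t3 : G.dist (p.getVert j.val) (p.getVert (n - 1)) ≤ n - 1 - j.val := by
            refine le_trans ((hTc.preconnected _ _).dist_anti hle) ?_
            have := dist_getVert_le hTc p j.val (n - 1) (by omega)
            omega
          have u1 := hG.dist_triangle (u := p.getVert 0) (v := p.getVert i.val)
            (w := p.getVert (n - 1))
          have u2 := hG.dist_triangle (u := p.getVert i.val) (v := p.getVert j.val)
            (w := p.getVert (n - 1))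
          omega
      have hlow : n - 1 ≤ _root_.eccent T (p.getVert 0) := by
        have := dist_getVert_eq hTc p hgeo (Nat.zero_le (n - 1)) (by omega)
        rw [Nat.sub_zero] at this
        exact this ▸ dist_le_eccent _ _
      have hupp : _root_.eccent G (p.getVert 0) ≤ n - 2 := eccent_le hkey
      have hstrict : (∑ v, _root_.eccent G v) < ∑ v, _root_.eccent T v := by
        refine Finset.sum_lt_sum (fun v _ => hpt v) ⟨p.getVert 0, Finset.mem_univ _, ?_⟩
        omega
      omega
    have hadj2 : ∀ i j : Fin n, G.Adj (φ i) (φ j) ↔ (pathGraph n).Adj i j := by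
      intro i j
      rw [pathGraph_adj]
      constructor
      · intro hadj
        have hne : i.val ≠ j.val := fun h => hadj.ne (congrArg φ (Fin.ext h))
        rcases Nat.lt_or_ge i.val j.val with h | h
        · rcases Nat.lt_or_ge (i.val + 1) j.val with h2 | h2
          · exact absurd (haux i j hadj (by omega)) not_false
          · left; omega
        · rcases Nat.lt_or_ge (j.val + 1) i.val with h2 | h2
          · exact absurd (haux j i hadj.symm (by omega)) not_false
          · right; omega
      · intro hadj
        have key : ∀ m : ℕ, m + 1 ≤ n - 1 → G.Adj (p.getVert m) (p.getVert (m + 1)) := by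
          intro m hm
          exact hle (p.adj_getVert_succ (by omega))
        rcases hadj with h | h
        · show G.Adj (p.getVert i.val) (p.getVert j.val)
          rw [← h]
          exact key i.val (by omega)
        · show G.Adj (p.getVert i.val) (p.getVert j.val)
          rw [← h]
          exact (key j.val (by omega)).symm
    exact ⟨(RelIso.mk (Equiv.ofBijective φ hbij)
      (fun {i j} => hadj2 i j) : (pathGraph n) ≃g G).symm⟩

end Main

section Converse
variable {V : Type*} [Fintype V]

lemma pathGraph_walk_bound {n : ℕ} {i j : Fin n} (w : (pathGraph n).Walk i j) :
    i.val ≤ j.val + w.length ∧ j.val ≤ i.val + w.length := by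
  induction w with
  | nil => simp
  | @cons x z y h q ih =>
    rw [pathGraph_adj] at h
    obtain ⟨ih1, ih2⟩ := ih
    rw [Walk.length_cons]
    omega

lemma iso_sum (G : SimpleGraph V) (hG : G.Connected) {n : ℕ} (hn : n = Fintype.card V)
    (φ : G ≃g pathGraph n) : pSum n ≤ ∑ v, _root_.eccent G v := by
  have hnev : Nonempty V := hG.nonempty
  have hn1 : 1 ≤ n := by rw [hn]; exact Fintype.card_pos
  have hlow : ∀ v : V, max (φ v).val (n - 1 - (φ v).val) ≤ _root_.eccent G v := by
    intro v
    have hbound : ∀ (x : V) (k : ℕ), ((φ x) : Fin n).val = k →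
        (k ≤ (φ v).val + G.dist v x ∧ (φ v).val ≤ k + G.dist v x) := by
      intro x k hk
      obtain ⟨w, hwl⟩ := (hG.preconnected v x).exists_walk_length_eq_dist
      have hb := pathGraph_walk_bound (w.map φ.toHom)
      rw [Walk.length_map, hwl] at hb
      have hb' : (φ v).val ≤ (φ x).val + G.dist v x ∧ (φ x).val ≤ (φ v).val + G.dist v x := hb
      rw [hk] at hb'
      exact ⟨hb'.2, hb'.1⟩
    have h0 := hbound (φ.symm ⟨0, by omega⟩) 0 (by rw [RelIso.apply_symm_apply])
    have hl := hbound (φ.symm ⟨n - 1, by omega⟩) (n - 1) (by rw [RelIso.apply_symm_apply])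
    have e0 : G.dist v (φ.symm ⟨0, by omega⟩) ≤ _root_.eccent G v := dist_le_eccent _ _
    have el : G.dist v (φ.symm ⟨n - 1, by omega⟩) ≤ _root_.eccent G v := dist_le_eccent _ _
    omega
  calc pSum n = ∑ k ∈ Finset.range n, max k (n - 1 - k) := rfl
    _ = ∑ i : Fin n, max i.val (n - 1 - i.val) := (Fin.sum_univ_eq_sum_range _ n).symm
    _ = ∑ v : V, max (φ v).val (n - 1 - (φ v).val) := (Equiv.sum_comp φ.toEquiv _).symm
    _ ≤ _ := Finset.sum_le_sum (fun v _ => hlow v)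

end Converse


theorem stmt_0 {V : Type*} [Fintype V] (G : SimpleGraph V) (hG : G.Connected)
    (n : ℕ) (hn : n = Fintype.card V) :
    avec G ≤ (⌊3 * (n : ℝ) ^ 2 / 4 - (n : ℝ) / 2⌋ : ℝ) / n ∧
      (avec G = (⌊3 * (n : ℝ) ^ 2 / 4 - (n : ℝ) / 2⌋ : ℝ) / n ↔
        Nonempty (G ≃g pathGraph n)) := by
  classical
  have hnev : Nonempty V := hG.nonempty
  have hn1 : 1 ≤ n := by rw [hn]; exact Fintype.card_pos
  have hnR : (0 : ℝ) < (n : ℝ) := by exact_mod_cast hn1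
  have hA : 2 * n ≤ 3 * n ^ 2 := by nlinarith
  have hps := pSum_formula n
  have hmod : n % 2 ≤ 1 := by omega
  have hfloor : ⌊3 * (n : ℝ) ^ 2 / 4 - (n : ℝ) / 2⌋ = (pSum n : ℤ) := by
    rw [Int.floor_eq_iff]
    have c1 : ((3 * n ^ 2 - 2 * n : ℕ) : ℝ) = 3 * (n : ℝ) ^ 2 - 2 * n := by
      rw [Nat.cast_sub hA]
      push_cast
      ring
    have c2 : (4 : ℝ) * pSum n ≤ 3 * (n : ℝ) ^ 2 - 2 * n := by
      rw [← c1]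
      exact_mod_cast (by omega : 4 * pSum n ≤ 3 * n ^ 2 - 2 * n)
    have c3 : 3 * (n : ℝ) ^ 2 - 2 * n ≤ 4 * pSum n + 1 := by
      rw [← c1]
      exact_mod_cast (by omega : 3 * n ^ 2 - 2 * n ≤ 4 * pSum n + 1)
    constructor
    · push_cast
      linarith
    · push_cast
      linarith
  have havec : avec G = ((∑ v, _root_.eccent G v : ℕ) : ℝ) / (n : ℝ) := by
    unfold avec
    rw [finsum_eq_sum_of_fintype, Nat.card_eq_fintype_card, ← hn, Nat.cast_sum]
  have hmain := main_nat G hG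
  rw [← hn] at hmain
  rw [havec, hfloor, Int.cast_natCast]
  constructor
  · gcongr
    exact_mod_cast hmain.1
  · constructor
    · intro h
      have hS : ((∑ v, _root_.eccent G v : ℕ) : ℝ) * (n : ℝ) = ((pSum n : ℕ) : ℝ) * (n : ℝ) :=
        (div_eq_div_iff (ne_of_gt hnR) (ne_of_gt hnR)).mp h
      have hS2 : ((∑ v, _root_.eccent G v : ℕ) : ℝ) = ((pSum n : ℕ) : ℝ) :=
        mul_right_cancel₀ (ne_of_gt hnR) hS
      exact hmain.2 (by exact_mod_cast hS2)
    · rintro ⟨φ⟩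
      have hSN : (∑ v, _root_.eccent G v) = pSum n := le_antisymm hmain.1 (iso_sum G hG hn φ)
      rw [hSN]
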